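/- The polynomial R_h(z1,z2) = (4/19)(z1 - z2)(z1^2 + z1*z2 + z2^2)(z1^6 - 11*z1^3*z2^3 + z2^6) lies in the kernel of the adjoint operator X0* = z2 ∂²/∂z1² + z1 ∂²/∂z2², i.e. z2 * ∂²R_h/∂z1² + z1 * ∂²R_h/∂z2² = 0. -/

import Mathlib

noncomputable def Rh (z1 z2 : ℝ) : ℝ :=
  (4/19) * (z1 - z2) * (z1^2 + z1*z2 + z2^2) * (z1^6 - 11*z1^3*z2^3 + z2^6)

lemma poly_d1 (a b c d : ℝ) (t : ℝ) :
    HasDerivAt (fun t : ℝ => a*t^9 + b*t^6 + c*t^3 + d)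
      (9*a*t^8 + 6*b*t^5 + 3*c*t^2) t := by
  have h9 := (hasDerivAt_pow 9 t).const_mul a
  have h6 := (hasDerivAt_pow 6 t).const_mul b
  have h3 := (hasDerivAt_pow 3 t).const_mul c
  have := ((h9.add h6).add h3).add_const d
  refine this.congr_deriv ?_
  push_cast; ring

lemma poly_d2 (a b c : ℝ) (t : ℝ) :
    HasDerivAt (fun t : ℝ => 9*a*t^8 + 6*b*t^5 + 3*c*t^2)
      (72*a*t^7 + 30*b*t^4 + 6*c*t) t := by
  have h8 := (hasDerivAt_pow 8 t).const_mul (9*a)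
  have h5 := (hasDerivAt_pow 5 t).const_mul (6*b)
  have h2 := (hasDerivAt_pow 2 t).const_mul (3*c)
  have := (h8.add h5).add h2
  refine this.congr_deriv ?_
  push_cast; ring

lemma iter2 (a b c d : ℝ) :
    ∀ t, iteratedDeriv 2 (fun t : ℝ => a*t^9 + b*t^6 + c*t^3 + d) t
      = 72*a*t^7 + 30*b*t^4 + 6*c*t := by
  intro t
  rw [iteratedDeriv_succ, iteratedDeriv_one]
  have hd1 : deriv (fun t : ℝ => a*t^9 + b*t^6 + c*t^3 + d)
      = fun t => 9*a*t^8 + 6*b*t^5 + 3*c*t^2 := by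
    funext s; exact (poly_d1 a b c d s).deriv
  rw [hd1]
  exact (poly_d2 a b c t).deriv

theorem stmt1 (z1 z2 : ℝ) :
    z2 * iteratedDeriv 2 (fun t => Rh t z2) z1
      + z1 * iteratedDeriv 2 (fun t => Rh z1 t) z2 = 0 := by
  have e1 : (fun t => Rh t z2)
      = fun t : ℝ => (4/19)*t^9 + (-48/19*z2^3)*t^6 + (48/19*z2^6)*t^3 + (-(4/19)*z2^9) := by
    funext t; unfold Rh; ring
  have e2 : (fun t => Rh z1 t)
      = fun t : ℝ => (-4/19)*t^9 + (48/19*z1^3)*t^6 + (-48/19*z1^6)*t^3 + ((4/19)*z1^9) := by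
    funext t; unfold Rh; ring
  rw [e1, e2, iter2, iter2]
  ring
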